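/- Let 0 < T ≤ 1, N ∈ ℕ with N ≥ 1, and 0 = s₀ < t₁ < s₁ < t₂ < ⋯ < s_N < t_{N+1} = T. Let h : ℝ → ℝ be continuous on [0,T], H(t) = ∫₀^t h(τ)dτ, H₀ = min_{t∈[0,T]} H(t), M₁ = max_{t∈[0,T]} e^{H(t)}, and let β ∈ ℝ satisfy β < 2e^{H₀}/T². Let θ₁, θ₂ ∈ (1,2), A₁, a₂, C_G > 0 and e_* = max(e^{−H₀θ₁/2}, e^{−H₀θ₂/2}). For i = 0,…,N let F̃ᵢ, G̃ᵢ : ℝ × ℝ → ℝ be continuous with |F̃ᵢ(t,v)| ≤ (A₁/θ₁)|v|^{θ₁} and |G̃ᵢ(t,v)| ≤ C_G for all t ∈ (sᵢ, t_{i+1}] and v ∈ ℝ, and for i = 1,…,N let Ĩᵢ : ℝ → ℝ be continuous with |Ĩᵢ(v)| ≤ a₂(|v|^{θ₂−1} + 1) for all v ∈ ℝ. For ε ∈ [0,1] and u ∈ E_T define J̃_ε(u) = ½‖u‖_E² − (β/2)∫₀^T |u'(t)|² dt − ∑_{i=0}^N ∫_{sᵢ}^{t_{i+1}} e^{H(t)}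 F̃ᵢ(t,u(t)) dt − ∑_{i=1}^N ∫₀^{u(tᵢ)} e^{H(tᵢ)} Ĩᵢ(s) ds − ε·∑_{i=0}^N ∫_{sᵢ}^{t_{i+1}} e^{H(t)} G̃ᵢ(t,u(t)) dt, where ‖u‖_E = (∫₀^T e^{H(t)}|u''(t)|² dt)^{1/2}. Then for all ε ∈ [0,1] and u ∈ E_T, J̃_ε(u) ≥ (1/2 − max(β,0)·T²/(4e^{H₀}))·‖u‖_E² − M₁A₁T e_*‖u‖_E^{θ₁} − N M₁ a₂ ((θ₂+1)/θ₂) e_* (‖u‖_E^{θ₂} + 1) − (N+1)·M₁·T·C_G. In particular, inf{ J̃_ε(u) : ε ∈ [0,1], u ∈ E_T } > −∞, and J̃ is coercive uniformly in ε: for every M ∈ ℝ there exists R > 0 such that J̃_ε(u) ≥ M whenever ε ∈ [0,1], u ∈ E_T and ‖u‖_E ≥ R. -/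

import Mathlib

open Set MeasureTheory Real

/-- `u`, with first and second derivatives `u'`, `u''`, belongs to the space
`E = H₀²(0,T)` of twice continuously differentiable functions on `[0,T]`
vanishing together with their first derivatives at the endpoints. -/
def IsInE (T : ℝ) (u u' u'' : ℝ → ℝ) : Prop :=
  (∀ t ∈ Set.Icc (0:ℝ) T, HasDerivAt u (u' t) t) ∧
  (∀ t ∈ Set.Icc (0:ℝ) T, HasDerivAt u' (u'' t) t) ∧
  ContinuousOn u'' (Set.Icc 0 T) ∧
  u 0 = 0 ∧ u T = 0 ∧ u' 0 = 0 ∧ u' T = 0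

/-- The norm `‖u‖_E = (∫₀^T e^{H(t)} |u''(t)|² dt)^{1/2}`. -/
noncomputable def normE (T : ℝ) (H : ℝ → ℝ) (u'' : ℝ → ℝ) : ℝ :=
  Real.sqrt (∫ x in (0:ℝ)..T, Real.exp (H x) * |u'' x| ^ 2)

lemma aux_abs_integral_le (f g : ℝ → ℝ) (v : ℝ)
    (hfg : ∀ s ∈ Set.uIcc (0:ℝ) v, |f s| ≤ g s)
    (hf : IntervalIntegrable f volume 0 v)
    (hg : IntervalIntegrable g volume 0 v) :
    |∫ s in (0:ℝ)..v, f s| ≤ |∫ s in (0:ℝ)..v, g s| := by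
  rcases le_or_gt 0 v with hv | hv
  · have h1 : |∫ s in (0:ℝ)..v, f s| ≤ ∫ s in (0:ℝ)..v, |f s| :=
      intervalIntegral.abs_integral_le_integral_abs hv
    have h2 : ∫ s in (0:ℝ)..v, |f s| ≤ ∫ s in (0:ℝ)..v, g s := by
      apply intervalIntegral.integral_mono_on hv hf.abs hg
      intro x hx
      exact hfg x (by rwa [Set.uIcc_of_le hv])
    calc |∫ s in (0:ℝ)..v, f s| ≤ ∫ s in (0:ℝ)..v, |f s| := h1
      _ ≤ ∫ s in (0:ℝ)..v, g s := h2
      _ ≤ |∫ s in (0:ℝ)..v, g s| := le_abs_self _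
  · have hv' : v ≤ 0 := hv.le
    have e1 : |∫ s in (0:ℝ)..v, f s| = |∫ s in v..(0:ℝ), f s| := by
      rw [intervalIntegral.integral_symm, abs_neg]
    have e2 : |∫ s in (0:ℝ)..v, g s| = |∫ s in v..(0:ℝ), g s| := by
      rw [intervalIntegral.integral_symm, abs_neg]
    rw [e1, e2]
    have h1 : |∫ s in v..(0:ℝ), f s| ≤ ∫ s in v..(0:ℝ), |f s| :=
      intervalIntegral.abs_integral_le_integral_abs hv'
    have h2 : ∫ s in v..(0:ℝ), |f s| ≤ ∫ s in v..(0:ℝ), g s := by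
      apply intervalIntegral.integral_mono_on hv' hf.symm.abs hg.symm
      intro x hx
      exact hfg x (by rwa [Set.uIcc_comm, Set.uIcc_of_le hv'])
    calc |∫ s in v..(0:ℝ), f s| ≤ ∫ s in v..(0:ℝ), |f s| := h1
      _ ≤ ∫ s in v..(0:ℝ), g s := h2
      _ ≤ |∫ s in v..(0:ℝ), g s| := le_abs_self _

lemma aux_CS (f : ℝ → ℝ) (t : ℝ) (ht : 0 ≤ t) (hf : ContinuousOn f (Set.Icc 0 t)) :
    (∫ x in (0:ℝ)..t, |f x|) ^ 2 ≤ t * ∫ x in (0:ℝ)..t, |f x| ^ 2 := by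
  have huIcc : Set.uIcc (0:ℝ) t = Set.Icc 0 t := Set.uIcc_of_le ht
  have habs : ContinuousOn (fun x => |f x|) (Set.uIcc 0 t) := by rw [huIcc]; exact hf.abs
  have h1 : IntervalIntegrable (fun x => |f x|) volume 0 t := habs.intervalIntegrable
  have h2 : IntervalIntegrable (fun x => |f x| ^ 2) volume 0 t := (habs.pow 2).intervalIntegrable
  set A := ∫ x in (0:ℝ)..t, |f x| with hA
  set B := ∫ x in (0:ℝ)..t, |f x| ^ 2 with hB
  have key : (0:ℝ) ≤ ∫ x in (0:ℝ)..t, (t * |f x| - A) ^ 2 :=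
    intervalIntegral.integral_nonneg ht (fun x _ => sq_nonneg _)
  have expand : ∫ x in (0:ℝ)..t, (t * |f x| - A) ^ 2
      = t ^ 2 * B - 2 * t * A * A + A ^ 2 * t := by
    have e1 : (fun x => (t * |f x| - A) ^ 2)
        = fun x => t ^ 2 * |f x| ^ 2 - 2 * t * A * |f x| + A ^ 2 := by
      funext x; ring
    rw [e1]
    rw [intervalIntegral.integral_add (((h2.const_mul _).sub (h1.const_mul _))) (intervalIntegrable_const),
      intervalIntegral.integral_sub (h2.const_mul _) (h1.const_mul _),
      intervalIntegral.integral_const_mul, intervalIntegral.integral_const_mul,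
      intervalIntegral.integral_const]
    simp only [← hA, ← hB, smul_eq_mul, sub_zero]
    ring
  rcases eq_or_lt_of_le ht with h0 | h0
  · have hA0 : A = 0 := by rw [hA, ← h0, intervalIntegral.integral_same]
    rw [hA0, ← h0]; norm_num
  · nlinarith [key, expand]

lemma aux_rpow_int_nonneg (θ : ℝ) (hθ : 0 < θ) (w : ℝ) (hw : 0 ≤ w) :
    |∫ s in (0:ℝ)..w, |s| ^ (θ - 1)| = w ^ θ / θ := by
  have hcong : ∫ s in (0:ℝ)..w, |s| ^ (θ - 1) = ∫ s in (0:ℝ)..w, s ^ (θ - 1) := by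
    apply intervalIntegral.integral_congr
    intro x hx
    rw [Set.uIcc_of_le hw] at hx
    show |x| ^ (θ - 1) = x ^ (θ - 1)
    rw [abs_of_nonneg hx.1]
  rw [hcong, integral_rpow (Or.inl (by linarith))]
  rw [sub_add_cancel, Real.zero_rpow (ne_of_gt hθ), sub_zero]
  rw [abs_of_nonneg (by positivity)]

lemma aux_rpow_int (θ : ℝ) (hθ : 0 < θ) (v : ℝ) :
    |∫ s in (0:ℝ)..v, |s| ^ (θ - 1)| ≤ |v| ^ θ / θ := by
  rcases le_or_gt 0 v with hv | hv
  · rw [abs_of_nonneg hv] at *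
    exact le_of_eq (aux_rpow_int_nonneg θ hθ v hv)
  · have h1 : ∫ s in (0:ℝ)..v, |s| ^ (θ - 1) = - ∫ s in v..(0:ℝ), |s| ^ (θ - 1) :=
      (intervalIntegral.integral_symm _ _)
    have h2 : ∫ s in (0:ℝ)..(-v), |(-s)| ^ (θ - 1) = ∫ s in v..(0:ℝ), |s| ^ (θ - 1) := by
      have := intervalIntegral.integral_comp_neg (a := (0:ℝ)) (b := -v) (fun s => |s| ^ (θ - 1))
      simpa using this
    have h3 : ∀ s : ℝ, |(-s)| ^ (θ - 1) = |s| ^ (θ - 1) := fun s => by rw [abs_neg]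
    rw [h1, abs_neg, ← h2]
    simp only [h3]
    rw [aux_rpow_int_nonneg θ hθ (-v) (by linarith), abs_of_neg hv]

lemma aux_young (θ δ X : ℝ) (hθ1 : 0 < θ) (hθ2 : θ < 2) (hδ : 0 < δ) (hX : 0 ≤ X) :
    X ^ θ ≤ δ * X ^ 2 + δ ^ (-(θ / (2 - θ))) := by
  have h2θ : (0:ℝ) < 2 - θ := by linarith
  set K : ℝ := δ ^ (-(1 / (2 - θ))) with hK
  have hKpos : 0 < K := Real.rpow_pos_of_pos hδ _
  have hKθ : K ^ θ = δ ^ (-(θ / (2 - θ))) := by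
    rw [hK, ← Real.rpow_mul hδ.le]
    congr 1
    ring
  have hrpos : 0 < δ ^ (-(θ / (2 - θ))) := Real.rpow_pos_of_pos hδ _
  rcases le_or_gt X K with hXK | hXK
  · have h1 : X ^ θ ≤ K ^ θ := Real.rpow_le_rpow hX hXK hθ1.le
    have h2 : 0 ≤ δ * X ^ 2 := by positivity
    rw [hKθ] at h1
    linarith
  · have hXpos : 0 < X := lt_trans hKpos hXK
    have hsplit : X ^ θ = X ^ (2:ℝ) * X ^ (θ - 2) := by
      rw [← Real.rpow_add hXpos]
      congr 1
      ring
    have h1 : X ^ (θ - 2) ≤ K ^ (θ - 2) :=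
      Real.rpow_le_rpow_of_nonpos hKpos hXK.le (by linarith)
    have h2 : K ^ (θ - 2) = δ := by
      rw [hK, ← Real.rpow_mul hδ.le]
      rw [show -(1 / (2 - θ)) * (θ - 2) = 1 by field_simp; ring]
      exact Real.rpow_one δ
    have h3 : X ^ (2:ℝ) = X ^ 2 := Real.rpow_two X
    have h4 : (0:ℝ) ≤ X ^ 2 := sq_nonneg X
    calc X ^ θ = X ^ (2:ℝ) * X ^ (θ - 2) := hsplit
      _ ≤ X ^ (2:ℝ) * δ := by
          apply mul_le_mul_of_nonneg_left (h2 ▸ h1) (by positivity)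
      _ = δ * X ^ 2 := by rw [h3]; ring
      _ ≤ δ * X ^ 2 + δ ^ (-(θ / (2 - θ))) := by linarith

lemma aux_assemble (E2 t2 S3 S4 S5 X2 c2 b3 b4 b5 : ℝ)
    (h1 : X2 = E2) (h2 : t2 ≤ c2 * X2) (h3 : S3 ≤ b3) (h4 : S4 ≤ b4) (h5 : S5 ≤ b5) :
    1 / 2 * E2 - t2 - S3 - S4 - S5 ≥ (1 / 2 - c2) * X2 - b3 - b4 - b5 := by
  nlinarith [h1, h2, h3, h4, h5]

lemma aux_combine (Jv c₂ ca cb cc δ Ca Cb x1 x2 X2 : ℝ)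
    (hb : Jv ≥ c₂ * X2 - ca * x1 - cb * (x2 + 1) - cc)
    (f1 : ca * x1 ≤ ca * (δ * X2 + Ca))
    (f2 : cb * x2 ≤ cb * (δ * X2 + Cb))
    (f3 : (ca + cb) * δ * X2 ≤ c₂ / 2 * X2) :
    c₂ / 2 * X2 - (ca * Ca + cb * Cb + cb + cc) ≤ Jv := by
  nlinarith [f1, f2, f3, hb]
set_option maxHeartbeats 2000000 in
theorem stmt10
    (T : ℝ) (hT0 : 0 < T) (hT1 : T ≤ 1)
    (N : ℕ) (hN : 1 ≤ N)
    (ss tt : ℕ → ℝ)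
    (hs0 : ss 0 = 0) (htN : tt (N + 1) = T)
    (hst : ∀ i ≤ N, ss i < tt (i + 1))
    (hts : ∀ i, 1 ≤ i → i ≤ N → tt i < ss i)
    (h : ℝ → ℝ) (hh : ContinuousOn h (Icc 0 T))
    (H : ℝ → ℝ) (hH : ∀ t, H t = ∫ τ in (0:ℝ)..t, h τ)
    (H₀ : ℝ) (hH₀ : IsLeast (H '' Icc 0 T) H₀)
    (M₁ : ℝ) (hM₁ : IsGreatest ((fun t => Real.exp (H t)) '' Icc 0 T) M₁)
    (β : ℝ) (hβ : β < 2 * Real.exp H₀ / T ^ 2)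
    (θ₁ θ₂ A₁ a₂ CG : ℝ)
    (hθ₁ : 1 < θ₁) (hθ₁' : θ₁ < 2) (hθ₂ : 1 < θ₂) (hθ₂' : θ₂ < 2)
    (hA₁ : 0 < A₁) (ha₂ : 0 < a₂) (hCG : 0 < CG)
    (estar : ℝ)
    (hestar : estar = max (Real.exp (-(H₀ * θ₁) / 2)) (Real.exp (-(H₀ * θ₂) / 2)))
    (Ftilde Gtilde : ℕ → ℝ → ℝ → ℝ)
    (hFt_cont : ∀ i ≤ N, Continuous (Function.uncurry (Ftilde i)))
    (hGt_cont : ∀ i ≤ N, Continuous (Function.uncurry (Gtilde i)))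
    (hFt_bound : ∀ i ≤ N, ∀ t ∈ Ioc (ss i) (tt (i + 1)), ∀ v : ℝ,
      |Ftilde i t v| ≤ (A₁ / θ₁) * |v| ^ θ₁)
    (hGt_bound : ∀ i ≤ N, ∀ t ∈ Ioc (ss i) (tt (i + 1)), ∀ v : ℝ,
      |Gtilde i t v| ≤ CG)
    (Itilde : ℕ → ℝ → ℝ)
    (hIt_cont : ∀ i, 1 ≤ i → i ≤ N → Continuous (Itilde i))
    (hIt_bound : ∀ i, 1 ≤ i → i ≤ N → ∀ v : ℝ,
      |Itilde i v| ≤ a₂ * (|v| ^ (θ₂ - 1) + 1))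
    (J : ℝ → (ℝ → ℝ) → (ℝ → ℝ) → (ℝ → ℝ) → ℝ)
    (hJ : ∀ (ε : ℝ) (u u' u'' : ℝ → ℝ), J ε u u' u'' =
      (1 / 2) * (∫ x in (0:ℝ)..T, Real.exp (H x) * |u'' x| ^ 2)
      - (β / 2) * (∫ x in (0:ℝ)..T, |u' x| ^ 2)
      - (∑ i ∈ Finset.range (N + 1),
          ∫ x in (ss i)..(tt (i + 1)), Real.exp (H x) * Ftilde i x (u x))
      - (∑ i ∈ Finset.Icc 1 N,
          ∫ s in (0:ℝ)..(u (tt i)), Real.exp (H (tt i)) * Itilde i s)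
      - ε * ∑ i ∈ Finset.range (N + 1),
          ∫ x in (ss i)..(tt (i + 1)), Real.exp (H x) * Gtilde i x (u x)) :
    (∀ ε ∈ Icc (0:ℝ) 1, ∀ u u' u'' : ℝ → ℝ, IsInE T u u' u'' →
      J ε u u' u'' ≥
        (1 / 2 - max β 0 * T ^ 2 / (4 * Real.exp H₀)) * (normE T H u'') ^ 2
        - M₁ * A₁ * T * estar * (normE T H u'') ^ θ₁
        - (N : ℝ) * M₁ * a₂ * ((θ₂ + 1) / θ₂) * estar * ((normE T H u'') ^ θ₂ + 1)
        - ((N : ℝ) + 1) * M₁ * T * CG) ∧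
    (∃ C : ℝ, ∀ ε ∈ Icc (0:ℝ) 1, ∀ u u' u'' : ℝ → ℝ, IsInE T u u' u'' →
      C ≤ J ε u u' u'') ∧
    (∀ M : ℝ, ∃ R : ℝ, 0 < R ∧ ∀ ε ∈ Icc (0:ℝ) 1, ∀ u u' u'' : ℝ → ℝ,
      IsInE T u u' u'' → R ≤ normE T H u'' → M ≤ J ε u u' u'') := by
  -- basic positivity and extremal facts
  have hθ₁pos : (0:ℝ) < θ₁ := by linarith
  have hθ₂pos : (0:ℝ) < θ₂ := by linarith
  have hH00 : H 0 = 0 := by rw [hH]; simp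
  have hHlow : ∀ t ∈ Icc (0:ℝ) T, H₀ ≤ H t := fun t ht => hH₀.2 ⟨t, ht, rfl⟩
  have hH0le : H₀ ≤ 0 := by
    have := hHlow 0 ⟨le_rfl, hT0.le⟩
    rw [hH00] at this
    exact this
  have hM₁ge : ∀ t ∈ Icc (0:ℝ) T, Real.exp (H t) ≤ M₁ := fun t ht => hM₁.2 ⟨t, ht, rfl⟩
  have hM₁pos : 0 < M₁ := lt_of_lt_of_le (Real.exp_pos _) (hM₁ge 0 ⟨le_rfl, hT0.le⟩)
  have hestar_pos : 0 < estar := by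
    rw [hestar]
    exact lt_of_lt_of_le (Real.exp_pos _) (le_max_left _ _)
  have hestar1 : Real.exp (-(H₀ * θ₁) / 2) ≤ estar := by
    rw [hestar]; exact le_max_left _ _
  have hestar2 : Real.exp (-(H₀ * θ₂) / 2) ≤ estar := by
    rw [hestar]; exact le_max_right _ _
  have hestar0 : Real.exp (-(H₀ / 2)) ≤ estar := by
    refine le_trans ?_ hestar1
    apply Real.exp_le_exp.2
    have h1 : H₀ * θ₁ ≤ H₀ * 1 := mul_le_mul_of_nonpos_left (by linarith) hH0le
    linarith
  -- chain facts for the partition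
  have hss_nonneg : ∀ i, i ≤ N → 0 ≤ ss i := by
    intro i
    induction i with
    | zero => intro _; rw [hs0]
    | succ n ih =>
      intro hn
      have h1 : 0 ≤ ss n := ih (by omega)
      have h2 : ss n < tt (n + 1) := hst n (by omega)
      have h3 : tt (n + 1) < ss (n + 1) := hts (n + 1) (by omega) hn
      linarith
  have htt_aux : ∀ j i, i + j = N → tt (i + 1) ≤ T := by
    intro j
    induction j with
    | zero => intro i hi; rw [show i = N by omega, htN]
    | succ n ih =>
      intro i hi
      have h1 : tt (i + 2) ≤ T := ih (i + 1) (by omega)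
      have h2 : tt (i + 1) < ss (i + 1) := hts (i + 1) (by omega) (by omega)
      have h3 : ss (i + 1) < tt (i + 2) := hst (i + 1) (by omega)
      linarith
  have htt_leT : ∀ i, i ≤ N → tt (i + 1) ≤ T := fun i hi => htt_aux (N - i) i (by omega)
  have hsum0 : ∀ n, n ≤ N → (∑ i ∈ Finset.range (n + 1), (tt (i + 1) - ss i)) ≤ tt (n + 1) := by
    intro n
    induction n with
    | zero => intro _; rw [Finset.sum_range_one, hs0]; linarith
    | succ n ih =>
      intro hn
      rw [Finset.sum_range_succ]
      have h1 := ih (by omega)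
      have h2 : tt (n + 1) < ss (n + 1) := hts (n + 1) (by omega) (by omega)
      linarith
  have hsumT : (∑ i ∈ Finset.range (N + 1), (tt (i + 1) - ss i)) ≤ T := by
    have := hsum0 N le_rfl
    rwa [htN] at this
  -- continuity of H
  have hHcont : ContinuousOn H (Icc 0 T) := by
    have hint : IntegrableOn h (Set.uIcc 0 T) volume := by
      rw [Set.uIcc_of_le hT0.le]
      exact hh.integrableOn_Icc
    have hc := intervalIntegral.continuousOn_primitive_interval hint
    rw [Set.uIcc_of_le hT0.le] at hc
    have he : H = fun x => ∫ τ in (0:ℝ)..x, h τ := funext hH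
    rw [he]
    exact hc
  -- Part 1: the main lower bound
  have bound1 : ∀ ε ∈ Icc (0:ℝ) 1, ∀ u u' u'' : ℝ → ℝ, IsInE T u u' u'' →
      J ε u u' u'' ≥
        (1 / 2 - max β 0 * T ^ 2 / (4 * Real.exp H₀)) * (normE T H u'') ^ 2
        - M₁ * A₁ * T * estar * (normE T H u'') ^ θ₁
        - (N : ℝ) * M₁ * a₂ * ((θ₂ + 1) / θ₂) * estar * ((normE T H u'') ^ θ₂ + 1)
        - ((N : ℝ) + 1) * M₁ * T * CG := by
    intro ε hε u u' u'' hu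
    obtain ⟨hud, hu'd, hu''c, hu0, huT, hu'0, hu'T⟩ := hu
    have hu'c : ContinuousOn u' (Icc 0 T) := fun t ht => (hu'd t ht).continuousAt.continuousWithinAt
    have huc : ContinuousOn u (Icc 0 T) := fun t ht => (hud t ht).continuousAt.continuousWithinAt
    set E2 := ∫ x in (0:ℝ)..T, Real.exp (H x) * |u'' x| ^ 2 with hE2
    set Q := ∫ x in (0:ℝ)..T, |u'' x| ^ 2 with hQ
    set X := normE T H u'' with hXd
    have hXE : X = Real.sqrt E2 := rfl
    have hE2nn : 0 ≤ E2 := intervalIntegral.integral_nonneg hT0.le (fun x _ => by positivity)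
    have hX2 : X ^ 2 = E2 := by rw [hXE]; exact Real.sq_sqrt hE2nn
    have hXnn : 0 ≤ X := by rw [hXE]; exact Real.sqrt_nonneg _
    have hsubIcc : ∀ t ∈ Icc (0:ℝ) T, Icc (0:ℝ) t ⊆ Icc (0:ℝ) T :=
      fun t ht => Set.Icc_subset_Icc le_rfl ht.2
    have hint2 : IntervalIntegrable (fun x => |u'' x| ^ 2) volume 0 T := by
      apply ContinuousOn.intervalIntegrable
      rw [Set.uIcc_of_le hT0.le]
      exact (hu''c.abs).pow 2
    have hintE : IntervalIntegrable (fun x => Real.exp (H x) * |u'' x| ^ 2) volume 0 T := by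
      apply ContinuousOn.intervalIntegrable
      rw [Set.uIcc_of_le hT0.le]
      exact (Real.continuous_exp.comp_continuousOn hHcont).mul ((hu''c.abs).pow 2)
    have hQnn : 0 ≤ Q := intervalIntegral.integral_nonneg hT0.le (fun x _ => by positivity)
    have hQE : Real.exp H₀ * Q ≤ E2 := by
      rw [hQ, ← intervalIntegral.integral_const_mul]
      apply intervalIntegral.integral_mono_on hT0.le (hint2.const_mul _) hintE
      intro x hx
      have h1 : Real.exp H₀ ≤ Real.exp (H x) := Real.exp_le_exp.2 (hHlow x hx)
      have h2 : (0:ℝ) ≤ |u'' x| ^ 2 := by positivity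
      exact mul_le_mul_of_nonneg_right h1 h2
    have hQle : Q ≤ Real.exp (-H₀) * X ^ 2 := by
      have e : Real.exp (-H₀) * (Real.exp H₀ * Q) = Q := by
        rw [← mul_assoc, ← Real.exp_add]
        simp
      calc Q = Real.exp (-H₀) * (Real.exp H₀ * Q) := e.symm
        _ ≤ Real.exp (-H₀) * E2 := mul_le_mul_of_nonneg_left hQE (Real.exp_pos _).le
        _ = Real.exp (-H₀) * X ^ 2 := by rw [hX2]
    set U := Real.exp (-(H₀ / 2)) * X with hU
    have hUnn : 0 ≤ U := by positivity
    have hU2 : U ^ 2 = Real.exp (-H₀) * X ^ 2 := by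
      rw [hU, mul_pow]
      congr 1
      rw [sq, ← Real.exp_add]
      ring_nf
    have hsqQ : Real.sqrt Q ≤ U := by
      have h1 : Q ≤ U ^ 2 := by rw [hU2]; exact hQle
      calc Real.sqrt Q ≤ Real.sqrt (U ^ 2) := Real.sqrt_le_sqrt h1
        _ = U := Real.sqrt_sq hUnn
    have hu'val : ∀ t ∈ Icc (0:ℝ) T, u' t = ∫ x in (0:ℝ)..t, u'' x := by
      intro t ht
      have hsub : Set.uIcc (0:ℝ) t ⊆ Icc 0 T := by
        rw [Set.uIcc_of_le ht.1]; exact hsubIcc t ht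
      have := intervalIntegral.integral_eq_sub_of_hasDerivAt
        (f := u') (f' := u'') (a := 0) (b := t)
        (fun x hx => hu'd x (hsub hx))
        (ContinuousOn.intervalIntegrable (hu''c.mono hsub))
      rw [this, hu'0, sub_zero]
    have hQt : ∀ t ∈ Icc (0:ℝ) T, (∫ x in (0:ℝ)..t, |u'' x| ^ 2) ≤ Q := by
      intro t ht
      have hi1 : IntervalIntegrable (fun x => |u'' x| ^ 2) volume 0 t := by
        apply ContinuousOn.intervalIntegrable
        rw [Set.uIcc_of_le ht.1]
        exact ((hu''c.mono (hsubIcc t ht)).abs).pow 2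
      have hi2 : IntervalIntegrable (fun x => |u'' x| ^ 2) volume t T := by
        apply ContinuousOn.intervalIntegrable
        rw [Set.uIcc_of_le ht.2]
        exact ((hu''c.mono (Set.Icc_subset_Icc ht.1 le_rfl)).abs).pow 2
      have hadd := intervalIntegral.integral_add_adjacent_intervals hi1 hi2
      have hpos : (0:ℝ) ≤ ∫ x in t..T, |u'' x| ^ 2 :=
        intervalIntegral.integral_nonneg ht.2 (fun x _ => by positivity)
      rw [hQ]
      linarith [hadd]
    have hu'bd2 : ∀ t ∈ Icc (0:ℝ) T, |u' t| ^ 2 ≤ t * Q := by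
      intro t ht
      have h1 : |u' t| ≤ ∫ x in (0:ℝ)..t, |u'' x| := by
        rw [hu'val t ht]
        exact intervalIntegral.abs_integral_le_integral_abs ht.1
      have h2 : (∫ x in (0:ℝ)..t, |u'' x|) ^ 2 ≤ t * ∫ x in (0:ℝ)..t, |u'' x| ^ 2 :=
        aux_CS u'' t ht.1 (hu''c.mono (hsubIcc t ht))
      calc |u' t| ^ 2 ≤ (∫ x in (0:ℝ)..t, |u'' x|) ^ 2 := by
            apply pow_le_pow_left₀ (abs_nonneg _) h1
        _ ≤ t * ∫ x in (0:ℝ)..t, |u'' x| ^ 2 := h2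
        _ ≤ t * Q := mul_le_mul_of_nonneg_left (hQt t ht) ht.1
    have hu'bd : ∀ t ∈ Icc (0:ℝ) T, |u' t| ≤ Real.sqrt Q := by
      intro t ht
      rw [Real.le_sqrt (abs_nonneg _) hQnn]
      calc |u' t| ^ 2 ≤ t * Q := hu'bd2 t ht
        _ ≤ 1 * Q := mul_le_mul_of_nonneg_right (le_trans ht.2 hT1) hQnn
        _ = Q := one_mul Q
    have hubd : ∀ t ∈ Icc (0:ℝ) T, |u t| ≤ U := by
      intro t ht
      have hsub : Set.uIcc (0:ℝ) t ⊆ Icc 0 T := by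
        rw [Set.uIcc_of_le ht.1]; exact hsubIcc t ht
      have hval : u t = ∫ x in (0:ℝ)..t, u' x := by
        have := intervalIntegral.integral_eq_sub_of_hasDerivAt
          (f := u) (f' := u') (a := 0) (b := t)
          (fun x hx => hud x (hsub hx))
          (ContinuousOn.intervalIntegrable (hu'c.mono hsub))
        rw [this, hu0, sub_zero]
      have hb : ∀ x ∈ Set.uIoc (0:ℝ) t, ‖u' x‖ ≤ Real.sqrt Q := by
        intro x hx
        rw [Set.uIoc_of_le ht.1] at hx
        exact hu'bd x ⟨hx.1.le, le_trans hx.2 ht.2⟩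
      calc |u t| = ‖∫ x in (0:ℝ)..t, u' x‖ := by rw [hval]; rfl
        _ ≤ Real.sqrt Q * |t - 0| := intervalIntegral.norm_integral_le_of_norm_le_const hb
        _ = Real.sqrt Q * t := by rw [sub_zero, abs_of_nonneg ht.1]
        _ ≤ Real.sqrt Q * 1 := by
            apply mul_le_mul_of_nonneg_left (le_trans ht.2 hT1) (Real.sqrt_nonneg _)
        _ = Real.sqrt Q := mul_one _
        _ ≤ U := hsqQ
    have hu'2int : (∫ x in (0:ℝ)..T, |u' x| ^ 2) ≤ Q * T ^ 2 / 2 := by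
      have hi1 : IntervalIntegrable (fun x => |u' x| ^ 2) volume 0 T := by
        apply ContinuousOn.intervalIntegrable
        rw [Set.uIcc_of_le hT0.le]
        exact (hu'c.abs).pow 2
      have hi2 : IntervalIntegrable (fun x => x * Q) volume 0 T :=
        (continuous_id.mul continuous_const).intervalIntegrable 0 T
      have h1 : (∫ x in (0:ℝ)..T, |u' x| ^ 2) ≤ ∫ x in (0:ℝ)..T, x * Q :=
        intervalIntegral.integral_mono_on hT0.le hi1 hi2 hu'bd2
      have h2 : (∫ x in (0:ℝ)..T, x * Q) = Q * T ^ 2 / 2 := by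
        rw [intervalIntegral.integral_mul_const, integral_id]
        ring
      linarith
    -- rpow facts for U
    have hUrp : ∀ θ : ℝ, U ^ θ = Real.exp (-(H₀ / 2) * θ) * X ^ θ := by
      intro θ
      rw [hU, Real.mul_rpow (Real.exp_pos _).le hXnn, Real.exp_mul]
    have hXθ₁nn : 0 ≤ X ^ θ₁ := Real.rpow_nonneg hXnn _
    have hXθ₂nn : 0 ≤ X ^ θ₂ := Real.rpow_nonneg hXnn _
    have hUθ₁ : U ^ θ₁ ≤ estar * X ^ θ₁ := by
      rw [hUrp θ₁]
      apply mul_le_mul_of_nonneg_right _ hXθ₁nn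
      refine le_trans (le_of_eq ?_) hestar1
      congr 1
      ring
    have hUθ₂ : U ^ θ₂ ≤ estar * X ^ θ₂ := by
      rw [hUrp θ₂]
      apply mul_le_mul_of_nonneg_right _ hXθ₂nn
      refine le_trans (le_of_eq ?_) hestar2
      congr 1
      ring
    have hUθ₁nn : 0 ≤ U ^ θ₁ := Real.rpow_nonneg hUnn _
    have hUθ₂nn : 0 ≤ U ^ θ₂ := Real.rpow_nonneg hUnn _
    -- Term 2 : the β term
    have hI'nn : (0:ℝ) ≤ ∫ x in (0:ℝ)..T, |u' x| ^ 2 :=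
      intervalIntegral.integral_nonneg hT0.le (fun x _ => by positivity)
    have hmnn : 0 ≤ max β 0 := le_max_right _ _
    have hterm2 : (β / 2) * (∫ x in (0:ℝ)..T, |u' x| ^ 2)
        ≤ max β 0 * T ^ 2 / (4 * Real.exp H₀) * X ^ 2 := by
      have hbm : β ≤ max β 0 := le_max_left _ _
      calc (β / 2) * (∫ x in (0:ℝ)..T, |u' x| ^ 2)
          ≤ (max β 0 / 2) * (∫ x in (0:ℝ)..T, |u' x| ^ 2) := by
            apply mul_le_mul_of_nonneg_right _ hI'nn
            linarith
        _ ≤ (max β 0 / 2) * (Q * T ^ 2 / 2) :=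
            mul_le_mul_of_nonneg_left hu'2int (by positivity)
        _ ≤ (max β 0 / 2) * (Real.exp (-H₀) * X ^ 2 * T ^ 2 / 2) := by
            apply mul_le_mul_of_nonneg_left _ (by positivity)
            have hq := mul_le_mul_of_nonneg_right hQle (by positivity : (0:ℝ) ≤ T ^ 2 / 2)
            calc Q * T ^ 2 / 2 = Q * (T ^ 2 / 2) := by ring
              _ ≤ Real.exp (-H₀) * X ^ 2 * (T ^ 2 / 2) := hq
              _ = Real.exp (-H₀) * X ^ 2 * T ^ 2 / 2 := by ring
        _ = max β 0 * T ^ 2 / (4 * Real.exp H₀) * X ^ 2 := by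
            rw [Real.exp_neg]
            field_simp
            ring
    -- Term 3 : the F term
    have hterm3 : |∑ i ∈ Finset.range (N + 1),
        ∫ x in (ss i)..(tt (i + 1)), Real.exp (H x) * Ftilde i x (u x)|
        ≤ M₁ * A₁ * T * estar * X ^ θ₁ := by
      set CF := M₁ * (A₁ / θ₁) * U ^ θ₁ with hCF
      have hCFnn : 0 ≤ CF := by
        apply mul_nonneg (mul_nonneg hM₁pos.le (by positivity)) hUθ₁nn
      have hterm : ∀ i ∈ Finset.range (N + 1),
          |∫ x in (ss i)..(tt (i + 1)), Real.exp (H x) * Ftilde i x (u x)|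
          ≤ CF * (tt (i + 1) - ss i) := by
        intro i hi
        rw [Finset.mem_range] at hi
        have hiN : i ≤ N := by omega
        have hlt := hst i hiN
        have hbd : ∀ x ∈ Set.uIoc (ss i) (tt (i + 1)),
            ‖Real.exp (H x) * Ftilde i x (u x)‖ ≤ CF := by
          intro x hx
          rw [Set.uIoc_of_le hlt.le] at hx
          have hxI : x ∈ Icc (0:ℝ) T :=
            ⟨le_trans (hss_nonneg i hiN) hx.1.le, le_trans hx.2 (htt_leT i hiN)⟩
          have h1 : |Ftilde i x (u x)| ≤ A₁ / θ₁ * |u x| ^ θ₁ := hFt_bound i hiN x hx (u x)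
          have h2 : |u x| ^ θ₁ ≤ U ^ θ₁ :=
            Real.rpow_le_rpow (abs_nonneg _) (hubd x hxI) hθ₁pos.le
          have h3 : Real.exp (H x) ≤ M₁ := hM₁ge x hxI
          calc ‖Real.exp (H x) * Ftilde i x (u x)‖
              = Real.exp (H x) * |Ftilde i x (u x)| := by
                rw [Real.norm_eq_abs, abs_mul, abs_of_pos (Real.exp_pos _)]
            _ ≤ M₁ * (A₁ / θ₁ * U ^ θ₁) := by
                apply mul_le_mul h3
                  (le_trans h1 (mul_le_mul_of_nonneg_left h2 (by positivity)))
                  (abs_nonneg _) hM₁pos.le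
            _ = CF := by rw [hCF]; ring
        calc |∫ x in (ss i)..(tt (i + 1)), Real.exp (H x) * Ftilde i x (u x)|
            ≤ CF * |tt (i + 1) - ss i| :=
              intervalIntegral.norm_integral_le_of_norm_le_const hbd
          _ = CF * (tt (i + 1) - ss i) := by rw [abs_of_pos (by linarith)]
      calc |∑ i ∈ Finset.range (N + 1),
            ∫ x in (ss i)..(tt (i + 1)), Real.exp (H x) * Ftilde i x (u x)|
          ≤ ∑ i ∈ Finset.range (N + 1),
            |∫ x in (ss i)..(tt (i + 1)), Real.exp (H x) * Ftilde i x (u x)| :=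
            Finset.abs_sum_le_sum_abs _ _
        _ ≤ ∑ i ∈ Finset.range (N + 1), CF * (tt (i + 1) - ss i) :=
            Finset.sum_le_sum hterm
        _ = CF * ∑ i ∈ Finset.range (N + 1), (tt (i + 1) - ss i) := by
            rw [Finset.mul_sum]
        _ ≤ CF * T := mul_le_mul_of_nonneg_left hsumT hCFnn
        _ = M₁ * (A₁ / θ₁) * U ^ θ₁ * T := by rw [hCF]
        _ ≤ M₁ * (A₁ / θ₁) * (estar * X ^ θ₁) * T := by
            apply mul_le_mul_of_nonneg_right _ hT0.le
            apply mul_le_mul_of_nonneg_left hUθ₁ (mul_nonneg hM₁pos.le (by positivity))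
        _ ≤ M₁ * A₁ * (estar * X ^ θ₁) * T := by
            have hd : A₁ / θ₁ ≤ A₁ := div_le_self hA₁.le (by linarith)
            have hnn : 0 ≤ estar * X ^ θ₁ := mul_nonneg hestar_pos.le hXθ₁nn
            apply mul_le_mul_of_nonneg_right _ hT0.le
            apply mul_le_mul_of_nonneg_right _ hnn
            exact mul_le_mul_of_nonneg_left hd hM₁pos.le
        _ = M₁ * A₁ * T * estar * X ^ θ₁ := by ring
    -- Term 4 : the impulsive term
    have hterm4 : |∑ i ∈ Finset.Icc 1 N,
        ∫ s in (0:ℝ)..(u (tt i)), Real.exp (H (tt i)) * Itilde i s|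
        ≤ (N : ℝ) * M₁ * a₂ * ((θ₂ + 1) / θ₂) * estar * (X ^ θ₂ + 1) := by
      set D := M₁ * (a₂ * (U ^ θ₂ / θ₂ + U)) with hD
      have hDnn : 0 ≤ D := by
        apply mul_nonneg hM₁pos.le
        apply mul_nonneg ha₂.le
        have : 0 ≤ U ^ θ₂ / θ₂ := div_nonneg hUθ₂nn hθ₂pos.le
        linarith
      have hterm : ∀ i ∈ Finset.Icc 1 N,
          |∫ s in (0:ℝ)..(u (tt i)), Real.exp (H (tt i)) * Itilde i s| ≤ D := by
        intro i hi
        rw [Finset.mem_Icc] at hi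
        obtain ⟨j, rfl⟩ : ∃ j, i = j + 1 := ⟨i - 1, by omega⟩
        have httI : tt (j + 1) ∈ Icc (0:ℝ) T :=
          ⟨le_trans (hss_nonneg j (by omega)) (hst j (by omega)).le, htt_leT j (by omega)⟩
        set v := u (tt (j + 1)) with hv
        have hvU : |v| ≤ U := hubd _ httI
        have e1 : (∫ s in (0:ℝ)..v, Real.exp (H (tt (j + 1))) * Itilde (j + 1) s)
            = Real.exp (H (tt (j + 1))) * ∫ s in (0:ℝ)..v, Itilde (j + 1) s :=
          intervalIntegral.integral_const_mul _ _
        have hIcont := hIt_cont (j + 1) (by omega) (by omega)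
        have hrpc : Continuous (fun s : ℝ => |s| ^ (θ₂ - 1)) :=
          continuous_abs.rpow_const (fun s => Or.inr (by linarith))
        have hgc : Continuous (fun s : ℝ => a₂ * (|s| ^ (θ₂ - 1) + 1)) :=
          continuous_const.mul (hrpc.add continuous_const)
        have h2 : |∫ s in (0:ℝ)..v, Itilde (j + 1) s|
            ≤ |∫ s in (0:ℝ)..v, a₂ * (|s| ^ (θ₂ - 1) + 1)| :=
          aux_abs_integral_le _ _ v (fun s _ => hIt_bound (j + 1) (by omega) (by omega) s)
            (hIcont.intervalIntegrable 0 v) (hgc.intervalIntegrable 0 v)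
        have h3 : |∫ s in (0:ℝ)..v, a₂ * (|s| ^ (θ₂ - 1) + 1)|
            = a₂ * |∫ s in (0:ℝ)..v, (|s| ^ (θ₂ - 1) + 1)| := by
          rw [intervalIntegral.integral_const_mul, abs_mul, abs_of_pos ha₂]
        have habs_int : IntervalIntegrable (fun s => |s| ^ (θ₂ - 1)) volume 0 v :=
          hrpc.intervalIntegrable 0 v
        have h4 : |∫ s in (0:ℝ)..v, (|s| ^ (θ₂ - 1) + 1)| ≤ |v| ^ θ₂ / θ₂ + |v| := by
          rw [intervalIntegral.integral_add habs_int intervalIntegrable_const]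
          have h5 := aux_rpow_int θ₂ hθ₂pos v
          have h6 : (∫ s in (0:ℝ)..v, (1:ℝ)) = v := by simp
          calc |(∫ s in (0:ℝ)..v, |s| ^ (θ₂ - 1)) + ∫ s in (0:ℝ)..v, (1:ℝ)|
              ≤ |∫ s in (0:ℝ)..v, |s| ^ (θ₂ - 1)| + |∫ s in (0:ℝ)..v, (1:ℝ)| := abs_add_le _ _
            _ ≤ |v| ^ θ₂ / θ₂ + |v| := by rw [h6]; exact add_le_add h5 le_rfl
        have h7 : |v| ^ θ₂ ≤ U ^ θ₂ :=
          Real.rpow_le_rpow (abs_nonneg _) hvU hθ₂pos.le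
        have h8 : |v| ^ θ₂ / θ₂ + |v| ≤ U ^ θ₂ / θ₂ + U := by
          apply add_le_add _ hvU
          exact by gcongr
        calc |∫ s in (0:ℝ)..v, Real.exp (H (tt (j + 1))) * Itilde (j + 1) s|
            = Real.exp (H (tt (j + 1))) * |∫ s in (0:ℝ)..v, Itilde (j + 1) s| := by
              rw [e1, abs_mul, abs_of_pos (Real.exp_pos _)]
          _ ≤ M₁ * (a₂ * (U ^ θ₂ / θ₂ + U)) := by
              apply mul_le_mul (hM₁ge _ httI) _ (abs_nonneg _) hM₁pos.le
              calc |∫ s in (0:ℝ)..v, Itilde (j + 1) s|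
                  ≤ |∫ s in (0:ℝ)..v, a₂ * (|s| ^ (θ₂ - 1) + 1)| := h2
                _ = a₂ * |∫ s in (0:ℝ)..v, (|s| ^ (θ₂ - 1) + 1)| := h3
                _ ≤ a₂ * (|v| ^ θ₂ / θ₂ + |v|) := mul_le_mul_of_nonneg_left h4 ha₂.le
                _ ≤ a₂ * (U ^ θ₂ / θ₂ + U) := mul_le_mul_of_nonneg_left h8 ha₂.le
          _ = D := by rw [hD]
      have hcard : (Finset.Icc 1 N).card = N := by
        rw [Nat.card_Icc]
        omega
      have hsum4 : |∑ i ∈ Finset.Icc 1 N,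
          ∫ s in (0:ℝ)..(u (tt i)), Real.exp (H (tt i)) * Itilde i s| ≤ (N : ℝ) * D := by
        calc |∑ i ∈ Finset.Icc 1 N,
            ∫ s in (0:ℝ)..(u (tt i)), Real.exp (H (tt i)) * Itilde i s|
            ≤ ∑ i ∈ Finset.Icc 1 N,
              |∫ s in (0:ℝ)..(u (tt i)), Real.exp (H (tt i)) * Itilde i s| :=
              Finset.abs_sum_le_sum_abs _ _
          _ ≤ (Finset.Icc 1 N).card • D := Finset.sum_le_card_nsmul _ _ _ hterm
          _ = (N : ℝ) * D := by rw [hcard, nsmul_eq_mul]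
      refine le_trans hsum4 ?_
      -- D ≤ M₁ * a₂ * ((θ₂+1)/θ₂) * estar * (X^θ₂+1), then multiply by N
      have hXle : X ≤ X ^ θ₂ + 1 := by
        rcases le_or_gt X 1 with hx | hx
        · linarith [hXθ₂nn]
        · have hh1 : X ^ (1:ℝ) ≤ X ^ θ₂ :=
            Real.rpow_le_rpow_of_exponent_le hx.le (by linarith)
          rw [Real.rpow_one] at hh1
          linarith
      have hUest : U ≤ estar * (X ^ θ₂ + 1) := by
        calc U = Real.exp (-(H₀ / 2)) * X := rfl
          _ ≤ estar * X := mul_le_mul_of_nonneg_right hestar0 hXnn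
          _ ≤ estar * (X ^ θ₂ + 1) := mul_le_mul_of_nonneg_left hXle hestar_pos.le
      have hre : (θ₂ + 1) / θ₂ * estar * (X ^ θ₂ + 1)
          = estar * X ^ θ₂ / θ₂ + estar / θ₂ + estar * X ^ θ₂ + estar := by
        field_simp
        ring
      have hfinal : U ^ θ₂ / θ₂ + U ≤ (θ₂ + 1) / θ₂ * estar * (X ^ θ₂ + 1) := by
        have e1 : U ^ θ₂ / θ₂ ≤ estar * X ^ θ₂ / θ₂ :=
          by gcongr
        have e2 : 0 ≤ estar / θ₂ := div_nonneg hestar_pos.le hθ₂pos.le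
        rw [hre]
        linarith [hUest]
      calc (N : ℝ) * D = (N : ℝ) * (M₁ * (a₂ * (U ^ θ₂ / θ₂ + U))) := by rw [hD]
        _ ≤ (N : ℝ) * (M₁ * (a₂ * ((θ₂ + 1) / θ₂ * estar * (X ^ θ₂ + 1)))) := by
            apply mul_le_mul_of_nonneg_left _ (Nat.cast_nonneg N)
            apply mul_le_mul_of_nonneg_left _ hM₁pos.le
            exact mul_le_mul_of_nonneg_left hfinal ha₂.le
        _ = (N : ℝ) * M₁ * a₂ * ((θ₂ + 1) / θ₂) * estar * (X ^ θ₂ + 1) := by ring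
    -- Term 5 : the G term
    have hterm5 : |ε * ∑ i ∈ Finset.range (N + 1),
        ∫ x in (ss i)..(tt (i + 1)), Real.exp (H x) * Gtilde i x (u x)|
        ≤ ((N : ℝ) + 1) * M₁ * T * CG := by
      have hterm : ∀ i ∈ Finset.range (N + 1),
          |∫ x in (ss i)..(tt (i + 1)), Real.exp (H x) * Gtilde i x (u x)|
          ≤ (M₁ * CG) * (tt (i + 1) - ss i) := by
        intro i hi
        rw [Finset.mem_range] at hi
        have hiN : i ≤ N := by omega
        have hlt := hst i hiN
        have hbd : ∀ x ∈ Set.uIoc (ss i) (tt (i + 1)),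
            ‖Real.exp (H x) * Gtilde i x (u x)‖ ≤ M₁ * CG := by
          intro x hx
          rw [Set.uIoc_of_le hlt.le] at hx
          have hxI : x ∈ Icc (0:ℝ) T :=
            ⟨le_trans (hss_nonneg i hiN) hx.1.le, le_trans hx.2 (htt_leT i hiN)⟩
          calc ‖Real.exp (H x) * Gtilde i x (u x)‖
              = Real.exp (H x) * |Gtilde i x (u x)| := by
                rw [Real.norm_eq_abs, abs_mul, abs_of_pos (Real.exp_pos _)]
            _ ≤ M₁ * CG := mul_le_mul (hM₁ge x hxI) (hGt_bound i hiN x hx (u x))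
                (abs_nonneg _) hM₁pos.le
        calc |∫ x in (ss i)..(tt (i + 1)), Real.exp (H x) * Gtilde i x (u x)|
            ≤ (M₁ * CG) * |tt (i + 1) - ss i| :=
              intervalIntegral.norm_integral_le_of_norm_le_const hbd
          _ = (M₁ * CG) * (tt (i + 1) - ss i) := by rw [abs_of_pos (by linarith)]
      have habsε : |ε| ≤ 1 := abs_le.2 ⟨by linarith [hε.1], hε.2⟩
      calc |ε * ∑ i ∈ Finset.range (N + 1),
            ∫ x in (ss i)..(tt (i + 1)), Real.exp (H x) * Gtilde i x (u x)|
          = |ε| * |∑ i ∈ Finset.range (N + 1),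
            ∫ x in (ss i)..(tt (i + 1)), Real.exp (H x) * Gtilde i x (u x)| := abs_mul _ _
        _ ≤ 1 * |∑ i ∈ Finset.range (N + 1),
            ∫ x in (ss i)..(tt (i + 1)), Real.exp (H x) * Gtilde i x (u x)| :=
            mul_le_mul_of_nonneg_right habsε (abs_nonneg _)
        _ = |∑ i ∈ Finset.range (N + 1),
            ∫ x in (ss i)..(tt (i + 1)), Real.exp (H x) * Gtilde i x (u x)| := one_mul _
        _ ≤ ∑ i ∈ Finset.range (N + 1),
            |∫ x in (ss i)..(tt (i + 1)), Real.exp (H x) * Gtilde i x (u x)| :=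
            Finset.abs_sum_le_sum_abs _ _
        _ ≤ ∑ i ∈ Finset.range (N + 1), (M₁ * CG) * (tt (i + 1) - ss i) :=
            Finset.sum_le_sum hterm
        _ = (M₁ * CG) * ∑ i ∈ Finset.range (N + 1), (tt (i + 1) - ss i) := by
            rw [Finset.mul_sum]
        _ ≤ (M₁ * CG) * T :=
            mul_le_mul_of_nonneg_left hsumT (mul_nonneg hM₁pos.le hCG.le)
        _ ≤ ((N : ℝ) + 1) * M₁ * T * CG := by
            have hN1 : (1:ℝ) ≤ (N : ℝ) + 1 := by
              have := Nat.cast_nonneg (α := ℝ) N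
              linarith
            have hnn : (0:ℝ) ≤ M₁ * CG * T :=
              mul_nonneg (mul_nonneg hM₁pos.le hCG.le) hT0.le
            calc M₁ * CG * T = 1 * (M₁ * CG * T) := by ring
              _ ≤ ((N : ℝ) + 1) * (M₁ * CG * T) := mul_le_mul_of_nonneg_right hN1 hnn
              _ = ((N : ℝ) + 1) * M₁ * T * CG := by ring
    -- assemble
    have h3 := (abs_le.1 hterm3).2
    have h4 := (abs_le.1 hterm4).2
    have h5 := (abs_le.1 hterm5).2
    rw [hJ]
    rw [← hE2]
    exact aux_assemble E2 _ _ _ _ _ _ _ _ _ hX2 hterm2 h3 h4 h5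
  -- coefficients
  have hT2pos : (0:ℝ) < T ^ 2 := by positivity
  have hm : max β 0 < 2 * Real.exp H₀ / T ^ 2 := max_lt hβ (by positivity)
  have hmT : max β 0 * T ^ 2 < 2 * Real.exp H₀ := (lt_div_iff₀ hT2pos).1 hm
  have hc : max β 0 * T ^ 2 / (4 * Real.exp H₀) < 1 / 2 := by
    rw [div_lt_iff₀ (by positivity)]
    linarith
  set c₂ : ℝ := 1 / 2 - max β 0 * T ^ 2 / (4 * Real.exp H₀) with hc₂
  have hc₂pos : 0 < c₂ := by rw [hc₂]; linarith
  set ca : ℝ := M₁ * A₁ * T * estar with hca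
  set cb : ℝ := (N : ℝ) * M₁ * a₂ * ((θ₂ + 1) / θ₂) * estar with hcb
  set cc : ℝ := ((N : ℝ) + 1) * M₁ * T * CG with hcc
  have hcann : 0 ≤ ca := by
    apply mul_nonneg (mul_nonneg (mul_nonneg hM₁pos.le hA₁.le) hT0.le) hestar_pos.le
  have hcbnn : 0 ≤ cb := by
    apply mul_nonneg _ hestar_pos.le
    apply mul_nonneg _ (by positivity)
    exact mul_nonneg (mul_nonneg (Nat.cast_nonneg N) hM₁pos.le) ha₂.le
  have hccnn : 0 ≤ cc := by
    have h1 : (0:ℝ) ≤ (N : ℝ) + 1 := by positivity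
    exact mul_nonneg (mul_nonneg (mul_nonneg h1 hM₁pos.le) hT0.le) hCG.le
  set δ : ℝ := c₂ / (2 * (ca + cb) + 2) with hδ
  have hδpos : 0 < δ := div_pos hc₂pos (by linarith)
  set Ca : ℝ := δ ^ (-(θ₁ / (2 - θ₁))) with hCa
  set Cb : ℝ := δ ^ (-(θ₂ / (2 - θ₂))) with hCb
  have hCann : 0 ≤ Ca := (Real.rpow_pos_of_pos hδpos _).le
  have hCbnn : 0 ≤ Cb := (Real.rpow_pos_of_pos hδpos _).le
  set D₀ : ℝ := ca * Ca + cb * Cb + cb + cc with hD₀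
  have hkeyδ : (ca + cb) * δ ≤ c₂ / 2 := by
    rw [hδ, ← mul_div_assoc]
    rw [div_le_div_iff₀ (by linarith) two_pos]
    linarith [hc₂pos]
  have hlow : ∀ ε ∈ Icc (0:ℝ) 1, ∀ u u' u'' : ℝ → ℝ, IsInE T u u' u'' →
      c₂ / 2 * (normE T H u'') ^ 2 - D₀ ≤ J ε u u' u'' := by
    intro ε hε u u' u'' hu
    have hb := bound1 ε hε u u' u'' hu
    set X := normE T H u'' with hX
    have hXnn : 0 ≤ X := Real.sqrt_nonneg _
    have hy1 : X ^ θ₁ ≤ δ * X ^ 2 + Ca :=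
      aux_young θ₁ δ X (by linarith) hθ₁' hδpos hXnn
    have hy2 : X ^ θ₂ ≤ δ * X ^ 2 + Cb :=
      aux_young θ₂ δ X (by linarith) hθ₂' hδpos hXnn
    have f1 : ca * X ^ θ₁ ≤ ca * (δ * X ^ 2 + Ca) := mul_le_mul_of_nonneg_left hy1 hcann
    have f2 : cb * X ^ θ₂ ≤ cb * (δ * X ^ 2 + Cb) := mul_le_mul_of_nonneg_left hy2 hcbnn
    have f3 : (ca + cb) * δ * X ^ 2 ≤ c₂ / 2 * X ^ 2 :=
      mul_le_mul_of_nonneg_right hkeyδ (sq_nonneg X)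
    rw [hD₀]
    exact aux_combine _ _ _ _ _ _ _ _ _ _ _ hb f1 f2 f3
  refine ⟨bound1, ⟨-D₀, ?_⟩, ?_⟩
  · intro ε hε u u' u'' hu
    have hl := hlow ε hε u u' u'' hu
    have hsq : 0 ≤ c₂ / 2 * (normE T H u'') ^ 2 :=
      mul_nonneg (by linarith) (sq_nonneg _)
    linarith
  · intro M
    set S : ℝ := 2 * (|M| + |D₀|) / c₂ with hS
    have hSnn : 0 ≤ S := div_nonneg (by positivity) hc₂pos.le
    refine ⟨Real.sqrt S + 1, by positivity, ?_⟩
    intro ε hε u u' u'' hu hR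
    have hl := hlow ε hε u u' u'' hu
    set X := normE T H u'' with hX
    have hXnn : 0 ≤ X := Real.sqrt_nonneg _
    have h1 : Real.sqrt S ^ 2 = S := Real.sq_sqrt hSnn
    have hRnn : (0:ℝ) ≤ Real.sqrt S + 1 := by positivity
    have hX2 : (Real.sqrt S + 1) ^ 2 ≤ X ^ 2 := pow_le_pow_left₀ hRnn hR 2
    have hR2 : S ≤ (Real.sqrt S + 1) ^ 2 := by
      have e : (Real.sqrt S + 1) ^ 2 = S + 2 * Real.sqrt S + 1 := by
        rw [add_sq, Real.sq_sqrt hSnn]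
        ring
      rw [e]
      linarith [Real.sqrt_nonneg S]
    have hc2S : c₂ / 2 * S = |M| + |D₀| := by
      rw [hS]
      field_simp
    have hfin : c₂ / 2 * S ≤ c₂ / 2 * X ^ 2 :=
      mul_le_mul_of_nonneg_left (le_trans hR2 hX2) (by linarith)
    have hM1 : M ≤ |M| := le_abs_self M
    have hD1 : D₀ ≤ |D₀| := le_abs_self D₀
    linarith
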